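/- Let 0 < σ < n/2, λ > 0, and suppose λ < |ξ| ≤ 10λ and |z| > λ with ξ ≠ z. Then there is a constant C = C(n, σ) > 0 such that G(λ; ξ, z) ≤ C·(|ξ| − λ)(|z|² − λ²) / (λ·|ξ − z|^{n−2σ+2}), where G(λ; ξ, z) = |ξ − z|^{2σ−n} − (λ/|ξ|)^{n−2σ}·|ξ^λ − z|^{2σ−n}. -/

import Mathlib

open Real

private lemma aux_bern {s u : ℝ} (hs : 0 < s) (hu : 0 < u) (hu1 : u ≤ 1) :
    u - u ^ (s + 1) ≤ s * (1 - u) := by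
  have h := one_add_mul_self_le_rpow_one_add (s := u - 1) (by linarith) (p := s + 1) (by linarith)
  have e : (1 : ℝ) + (u - 1) = u := by ring
  rw [e] at h
  nlinarith

private lemma aux_mvt {x y s : ℝ} (hx : 0 < x) (hxy : x ≤ y) (hs : 0 < s) :
    x ^ (-s) - y ^ (-s) ≤ s * x ^ (-s - 1) * (y - x) := by
  have hy : 0 < y := hx.trans_le hxy
  have hu : 0 < x / y := div_pos hx hy
  have hu1 : x / y ≤ 1 := (div_le_one hy).2 hxy
  have h := aux_bern hs hu hu1
  have hK : (0:ℝ) ≤ x ^ (-s - 1) * y := by positivity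
  have h2 := mul_le_mul_of_nonneg_right h hK
  have e1 : (x / y) * (x ^ (-s-1) * y) = x ^ (-s) := by
    have h0 : x / y * (x ^ (-s-1) * y) = x ^ (-s-1) * x := by
      field_simp
    rw [h0, ← Real.rpow_add_one hx.ne']
    norm_num
  have e2 : (x / y) ^ (s + 1) * (x ^ (-s-1) * y) = y ^ (-s) := by
    rw [Real.div_rpow hx.le hy.le]
    have h1 : x ^ (s+1) * x ^ (-s-1) = 1 := by
      rw [← Real.rpow_add hx]; norm_num
    have h2 : y / y ^ (s+1) = y ^ (-s) := by
      rw [show y / y ^ (s+1) = y ^ (1:ℝ) / y ^ (s+1) by rw [Real.rpow_one],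
        ← Real.rpow_sub hy]
      norm_num
    calc x ^ (s+1) / y ^ (s+1) * (x ^ (-s-1) * y)
        = (x ^ (s+1) * x ^ (-s-1)) * (y / y ^ (s+1)) := by ring
      _ = y ^ (-s) := by rw [h1, h2, one_mul]
  calc x ^ (-s) - y ^ (-s)
      = (x / y) * (x ^ (-s-1) * y) - (x / y) ^ (s + 1) * (x ^ (-s-1) * y) := by rw [e1, e2]
    _ = (x / y - (x / y) ^ (s + 1)) * (x ^ (-s-1) * y) := by ring
    _ ≤ s * (1 - x / y) * (x ^ (-s-1) * y) := h2
    _ = s * x ^ (-s - 1) * (y - x) := by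
        field_simp

set_option maxHeartbeats 1000000 in
theorem stmt_6 (n : ℕ) (σ : ℝ) (hσ : 0 < σ) (hn : 2 * σ < n) :
    ∃ C : ℝ, 0 < C ∧ ∀ (lam : ℝ) (ξ z : EuclideanSpace ℝ (Fin n)),
      0 < lam → lam < ‖ξ‖ → ‖ξ‖ ≤ 10 * lam → lam < ‖z‖ → ξ ≠ z →
      ‖ξ - z‖ ^ (2 * σ - (n : ℝ))
          - (lam / ‖ξ‖) ^ ((n : ℝ) - 2 * σ) * ‖(lam ^ 2 / ‖ξ‖ ^ 2) • ξ - z‖ ^ (2 * σ - (n : ℝ))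
        ≤ C * ((‖ξ‖ - lam) * (‖z‖ ^ 2 - lam ^ 2)) / (lam * ‖ξ - z‖ ^ ((n : ℝ) - 2 * σ + 2)) := by
  set s : ℝ := ((n : ℝ) - 2 * σ) / 2 with hs_def
  have hs : 0 < s := by simp only [hs_def]; linarith
  refine ⟨11 * s, by positivity, ?_⟩
  intro lam ξ z hlam hlξ huξ hlz hne
  have hξ : 0 < ‖ξ‖ := hlam.trans hlξ
  have hd : 0 < ‖ξ - z‖ := norm_pos_iff.2 (sub_ne_zero.2 hne)
  set d : ℝ := ‖ξ - z‖ with hd_def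
  set w : EuclideanSpace ℝ (Fin n) := (lam / ‖ξ‖) • ξ - (‖ξ‖ / lam) • z with hw_def
  set A : ℝ := ‖w‖ with hA_def
  -- scaling relation
  have c1 : lam / ‖ξ‖ * (lam / ‖ξ‖) = lam ^ 2 / ‖ξ‖ ^ 2 := by
    field_simp
  have c2 : lam / ‖ξ‖ * (‖ξ‖ / lam) = 1 := by
    field_simp
  have hsmul : (lam ^ 2 / ‖ξ‖ ^ 2) • ξ - z = (lam / ‖ξ‖) • w := by
    rw [hw_def, smul_sub, smul_smul, smul_smul, c1, c2, one_smul]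
  have hnorm : ‖(lam ^ 2 / ‖ξ‖ ^ 2) • ξ - z‖ = (lam / ‖ξ‖) * A := by
    rw [hsmul, norm_smul, Real.norm_eq_abs, abs_of_pos (by positivity)]
  -- expansion of norms
  have expand : ∀ (c e : ℝ) (u v : EuclideanSpace ℝ (Fin n)), 0 ≤ c → 0 ≤ e →
      ‖c • u - e • v‖ ^ 2 = c^2 * ‖u‖^2 - 2*(c*e) * (inner ℝ u v : ℝ) + e^2 * ‖v‖^2 := by
    intro c e u v hc he
    rw [norm_sub_sq_real, norm_smul, norm_smul, real_inner_smul_left, real_inner_smul_right,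
      Real.norm_eq_abs, Real.norm_eq_abs, abs_of_nonneg hc, abs_of_nonneg he, mul_pow, mul_pow]
    ring
  have hZ : 0 < ‖z‖ ^ 2 - lam ^ 2 := by nlinarith
  have hX : 0 < ‖ξ‖ ^ 2 - lam ^ 2 := by nlinarith
  have hA2 : A ^ 2 = d ^ 2 + (‖ξ‖ ^ 2 - lam ^ 2) * (‖z‖ ^ 2 - lam ^ 2) / lam ^ 2 := by
    have h1 := expand (lam / ‖ξ‖) (‖ξ‖ / lam) ξ z (by positivity) (by positivity)
    have h2 : d ^ 2 = ‖ξ‖^2 - 2 * (inner ℝ ξ z : ℝ) + ‖z‖^2 := by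
      rw [hd_def]; rw [norm_sub_sq_real]
    rw [hA_def, hw_def, h1, h2]
    field_simp
    ring
  have hd2A2 : d ^ 2 ≤ A ^ 2 := by
    rw [hA2]
    have : 0 ≤ (‖ξ‖ ^ 2 - lam ^ 2) * (‖z‖ ^ 2 - lam ^ 2) / lam ^ 2 := by positivity
    linarith
  have hA : 0 < A := by
    have : 0 < A ^ 2 := lt_of_lt_of_le (by positivity) hd2A2
    cases' (norm_nonneg w).lt_or_eq with h h
    · exact h
    · exfalso; rw [hA_def] at this; nlinarith
  -- second term equals A ^ (2σ - n)
  have hsecond : (lam / ‖ξ‖) ^ ((n : ℝ) - 2 * σ) * ‖(lam ^ 2 / ‖ξ‖ ^ 2) • ξ - z‖ ^ (2 * σ - (n : ℝ))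
      = A ^ (2 * σ - (n : ℝ)) := by
    rw [hnorm, Real.mul_rpow (by positivity) hA.le, ← mul_assoc, ← Real.rpow_add (by positivity : 0 < lam / ‖ξ‖)]
    have : (n : ℝ) - 2 * σ + (2 * σ - (n : ℝ)) = 0 := by ring
    rw [this, Real.rpow_zero, one_mul]
  -- square-to-rpow conversion
  have hp : ∀ (t r : ℝ), 0 ≤ t → (t ^ 2) ^ r = t ^ (2 * r) := by
    intro t r ht
    rw [← Real.rpow_natCast t 2, ← Real.rpow_mul ht]
    norm_num
  have hmvt := aux_mvt (x := d ^ 2) (y := A ^ 2) (by positivity) hd2A2 hs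
  rw [hp d (-s) hd.le, hp A (-s) hA.le, hp d (-s - 1) hd.le] at hmvt
  have eexp1 : 2 * (-s) = 2 * σ - (n : ℝ) := by rw [hs_def]; ring
  have eexp2 : 2 * (-s - 1) = 2 * σ - (n : ℝ) - 2 := by rw [hs_def]; ring
  rw [eexp1, eexp2] at hmvt
  rw [hsecond]
  refine le_trans hmvt ?_
  -- final arithmetic
  have hDinv : d ^ (2 * σ - (n : ℝ) - 2) = (d ^ ((n : ℝ) - 2 * σ + 2))⁻¹ := by
    rw [← Real.rpow_neg hd.le]
    congr 1; ring
  set D : ℝ := d ^ ((n : ℝ) - 2 * σ + 2) with hD_def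
  have hD : 0 < D := by rw [hD_def]; positivity
  rw [hDinv, hA2]
  have hAd : d ^ 2 + (‖ξ‖ ^ 2 - lam ^ 2) * (‖z‖ ^ 2 - lam ^ 2) / lam ^ 2 - d ^ 2
      = (‖ξ‖ ^ 2 - lam ^ 2) * (‖z‖ ^ 2 - lam ^ 2) / lam ^ 2 := by ring
  rw [hAd]
  have heq : s * D⁻¹ * ((‖ξ‖ ^ 2 - lam ^ 2) * (‖z‖ ^ 2 - lam ^ 2) / lam ^ 2)
      = s * ((‖ξ‖ ^ 2 - lam ^ 2) * (‖z‖ ^ 2 - lam ^ 2)) / (lam ^ 2 * D) := by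
    field_simp
  rw [heq, div_le_div_iff₀ (by positivity) (by positivity)]
  have h11 : ‖ξ‖ ^ 2 - lam ^ 2 ≤ 11 * lam * (‖ξ‖ - lam) := by nlinarith
  nlinarith [mul_le_mul_of_nonneg_left h11 (by positivity : (0:ℝ) ≤ s * D * (‖z‖ ^ 2 - lam ^ 2) * lam),
    mul_pos (mul_pos hs hD) hZ, sub_pos.2 hlξ]
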